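/- Let a = (1 + √10)/6 and Tₙ = {x ∈ ℝⁿ : x₁ > 1/2, ‖x − a·e₁‖ < 1/2, ‖x‖ < 1}. Then vol(Tₙ) ≥ ∫_{1/2 − a}^{a − 1/2} v_{n−1} (1/4 − t²)^{(n−1)/2} dt, where v_{n−1} is the volume of the (n−1)-dimensional unit ball. -/

import Mathlib

open MeasureTheory Metric

noncomputable def a : ℝ := (1 + Real.sqrt 10) / 6

noncomputable def T (n : ℕ) (hn : 0 < n) : Set (EuclideanSpace ℝ (Fin n)) :=
  {x | x ⟨0, hn⟩ > 1/2 ∧ ‖x - a • EuclideanSpace.single (⟨0, hn⟩ : Fin n) (1 : ℝ)‖ < 1/2 ∧ ‖x‖ < 1}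

lemma a_gt : 1/2 < a := by
  unfold a
  nlinarith [Real.sq_sqrt (show (0:ℝ) ≤ 10 by norm_num), Real.sqrt_nonneg 10]

lemma a_lt : a < 5/6 := by
  unfold a
  nlinarith [Real.sq_sqrt (show (0:ℝ) ≤ 10 by norm_num), Real.sqrt_nonneg 10]

lemma a_quad : 3 * a^2 - a = 3/4 := by
  have h : Real.sqrt 10 ^ 2 = 10 := Real.sq_sqrt (by norm_num)
  unfold a; nlinarith [h]

def S (m : ℕ) : Set (ℝ × EuclideanSpace ℝ (Fin m)) :=
  {p | p.1 ∈ Set.Ioo (1/2) (2*a - 1/2) ∧ (p.1 - a)^2 + ‖p.2‖^2 < 1/4}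

lemma isOpen_S (m : ℕ) : IsOpen (S m) := by
  apply IsOpen.inter
  · exact (isOpen_Ioo).preimage continuous_fst
  · exact isOpen_lt (((continuous_fst.sub continuous_const).pow 2).add
      ((continuous_snd.norm).pow 2)) continuous_const

lemma volS (m : ℕ) :
    volume (S m)
    = ∫⁻ t in Set.Ioo (1/2 - a) (a - 1/2),
        ENNReal.ofReal (Real.sqrt (1/4 - t^2) ^ m) *
          volume (ball (0 : EuclideanSpace ℝ (Fin m)) 1) := by
  rw [Measure.volume_eq_prod, Measure.prod_apply (isOpen_S m).measurableSet]
  have slice : ∀ t : ℝ, (Prod.mk t ⁻¹' S m) =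
      if t ∈ Set.Ioo (1/2) (2*a - 1/2) then
        ball (0 : EuclideanSpace ℝ (Fin m)) (Real.sqrt (1/4 - (t-a)^2)) else ∅ := by
    intro t
    split_ifs with ht
    · ext y
      have hpos : (0:ℝ) < 1/4 - (t-a)^2 := by
        obtain ⟨h1, h2⟩ := ht
        nlinarith [a_gt, a_lt]
      simp only [S, Set.mem_preimage, Set.mem_setOf_eq, mem_ball, dist_zero_right, ht, true_and]
      rw [Real.lt_sqrt (norm_nonneg y)]
      constructor <;> intro h <;> linarith
    · ext y
      simp only [S, Set.mem_preimage, Set.mem_setOf_eq, ht, false_and, Set.mem_empty_iff_false]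
  calc (∫⁻ t, volume (Prod.mk t ⁻¹' S m))
      = ∫⁻ t in Set.Ioo (1/2) (2*a - 1/2),
          ENNReal.ofReal (Real.sqrt (1/4 - (t-a)^2) ^ m) *
            volume (ball (0 : EuclideanSpace ℝ (Fin m)) 1) := by
        rw [← lintegral_indicator measurableSet_Ioo]
        apply lintegral_congr; intro t
        rw [slice, Set.indicator_apply]
        split_ifs with ht
        · have hpos : (0:ℝ) < 1/4 - (t-a)^2 := by
            obtain ⟨h1, h2⟩ := ht; nlinarith [a_gt, a_lt]
          rw [Measure.addHaar_ball_of_pos volume _ (Real.sqrt_pos.2 hpos),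
            finrank_euclideanSpace_fin]
        · simp
    _ = _ := by
        rw [← (measurePreserving_add_right volume a).setLIntegral_comp_preimage_emb
          (measurableEmbedding_addRight a)]
        have : (fun x : ℝ => x + a) ⁻¹' Set.Ioo (1/2) (2*a - 1/2) = Set.Ioo (1/2 - a) (a - 1/2) := by
          rw [Set.preimage_add_const_Ioo]; ring_nf
        rw [this]
        apply setLIntegral_congr_fun measurableSet_Ioo
        intro t ht
        simp [add_sub_cancel_right]

noncomputable def phi (m : ℕ) : EuclideanSpace ℝ (Fin (m+1)) ≃ᵐ ℝ × EuclideanSpace ℝ (Fin m) :=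
  (MeasurableEquiv.toLp 2 (Fin (m+1) → ℝ)).symm.trans
    ((MeasurableEquiv.piFinSuccAbove (fun _ : Fin (m+1) => ℝ) 0).trans
      (MeasurableEquiv.prodCongr (MeasurableEquiv.refl ℝ)
        (MeasurableEquiv.toLp 2 (Fin m → ℝ))))

lemma phi_mp (m : ℕ) : MeasurePreserving (phi m) volume volume := by
  exact (((MeasurePreserving.id volume).prod
      (EuclideanSpace.volume_preserving_symm_measurableEquiv_toLp (Fin m)).symm).comp
    (volume_preserving_piFinSuccAbove (fun _ : Fin (m+1) => ℝ) 0)).comp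
    (EuclideanSpace.volume_preserving_symm_measurableEquiv_toLp (Fin (m+1)))

lemma phi_fst (m : ℕ) (x : EuclideanSpace ℝ (Fin (m+1))) : (phi m x).1 = x 0 := rfl

lemma phi_snd (m : ℕ) (x : EuclideanSpace ℝ (Fin (m+1))) (j : Fin m) :
    (phi m x).2 j = x j.succ := by
  simp [phi, MeasurableEquiv.piFinSuccAbove, Fin.insertNthEquiv, MeasurableEquiv.toLp,
    MeasurableEquiv.prodCongr, Fin.succAbove]
  rfl

lemma norm_sq_split (m : ℕ) (x : EuclideanSpace ℝ (Fin (m+1))) :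
    ‖x‖^2 = (x 0)^2 + ‖(phi m x).2‖^2 := by
  have h1 : ‖x‖^2 = ∑ i, (x i)^2 := by
    rw [EuclideanSpace.norm_eq, Real.sq_sqrt (by positivity)]
    simp [Real.norm_eq_abs, sq_abs]
  have h2 : ‖(phi m x).2‖^2 = ∑ j : Fin m, (x j.succ)^2 := by
    rw [EuclideanSpace.norm_eq, Real.sq_sqrt (by positivity)]
    simp [Real.norm_eq_abs, sq_abs, phi_snd]
  rw [h1, h2, Fin.sum_univ_succ]

lemma preimage_subset (m : ℕ) : (phi m) ⁻¹' (S m) ⊆ T (m+1) (Nat.succ_pos m) := by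
  intro x hx
  obtain ⟨⟨ht1, ht2⟩, hball⟩ := hx
  rw [phi_fst] at ht1 ht2 hball
  have hzero : (⟨0, Nat.succ_pos m⟩ : Fin (m+1)) = 0 := rfl
  set z := x - a • EuclideanSpace.single (⟨0, Nat.succ_pos m⟩ : Fin (m+1)) (1 : ℝ) with hz
  have hz0 : z 0 = x 0 - a := by
    simp [hz, hzero, EuclideanSpace.single_apply]
  have hzsucc : ∀ j : Fin m, z j.succ = x j.succ := by
    intro j
    simp [hz, hzero, EuclideanSpace.single_apply, (Fin.succ_ne_zero j)]
  have hnz : ‖(phi m z).2‖ = ‖(phi m x).2‖ := by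
    congr 1
    ext j
    rw [phi_snd, phi_snd, hzsucc]
  have hzn : ‖z‖^2 = (x 0 - a)^2 + ‖(phi m x).2‖^2 := by
    rw [norm_sq_split m z, hz0, hnz]
  refine ⟨by rw [hzero]; exact ht1, ?_, ?_⟩
  · rw [← hz]
    nlinarith [norm_nonneg z, hzn, hball]
  · have hxn := norm_sq_split m x
    nlinarith [norm_nonneg x, a_gt, a_quad, hball, ht1, ht2]

lemma vol_T_ne_top (m : ℕ) : volume (T (m+1) (Nat.succ_pos m)) ≠ ⊤ := by
  have : T (m+1) (Nat.succ_pos m) ⊆ ball (0 : EuclideanSpace ℝ (Fin (m+1))) 1 := by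
    intro x hx
    rw [mem_ball, dist_zero_right]
    exact hx.2.2
  exact ((measure_mono this).trans_lt measure_ball_lt_top).ne

lemma pre (m : ℕ) :
    (volume (T (m+1) (Nat.succ_pos m))).toReal ≥
      ∫ t in (1/2 - a)..(a - 1/2),
        (volume (ball (0 : EuclideanSpace ℝ (Fin m)) 1)).toReal *
          (1/4 - t ^ 2) ^ ((m : ℝ) / 2) := by
  have hle : (1:ℝ)/2 - a ≤ a - 1/2 := by linarith [a_gt]
  set c := (volume (ball (0 : EuclideanSpace ℝ (Fin m)) 1)).toReal with hc
  have hc0 : 0 ≤ c := ENNReal.toReal_nonneg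
  have hpos : ∀ t ∈ Set.Ioo ((1:ℝ)/2 - a) (a - 1/2), (0:ℝ) < 1/4 - t^2 := by
    intro t ht
    obtain ⟨h1, h2⟩ := ht
    nlinarith [a_gt, a_lt]
  rw [intervalIntegral.integral_of_le hle, MeasureTheory.integral_Ioc_eq_integral_Ioo]
  rw [MeasureTheory.integral_eq_lintegral_of_nonneg_ae]
  · have hlin : (∫⁻ t in Set.Ioo ((1:ℝ)/2 - a) (a - 1/2),
        ENNReal.ofReal (c * (1/4 - t^2) ^ ((m : ℝ)/2))) = volume (S m) := by
      rw [volS]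
      apply setLIntegral_congr_fun measurableSet_Ioo
      intro t ht
      dsimp only
      have h14 := hpos t ht
      rw [ENNReal.ofReal_mul hc0, hc, ENNReal.ofReal_toReal measure_ball_lt_top.ne, mul_comm]
      congr 2
      rw [Real.sqrt_eq_rpow, ← Real.rpow_natCast ((1/4 - t^2) ^ ((1:ℝ)/2)) m,
        ← Real.rpow_mul h14.le]
      congr 1
      ring
    rw [hlin]
    have h1 : volume (S m) = volume ((phi m) ⁻¹' (S m)) :=
      ((phi_mp m).measure_preimage (isOpen_S m).measurableSet.nullMeasurableSet).symm
    have h2 : volume ((phi m) ⁻¹' (S m)) ≤ volume (T (m+1) (Nat.succ_pos m)) :=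
      measure_mono (preimage_subset m)
    exact ENNReal.toReal_mono (vol_T_ne_top m) (h1 ▸ h2)
  · filter_upwards [ae_restrict_mem measurableSet_Ioo] with t ht
    have := hpos t ht
    positivity
  · apply Measurable.aestronglyMeasurable
    fun_prop

theorem stmt_10 (n : ℕ) (hn : 2 ≤ n) :
    (volume (T n (by omega))).toReal ≥
      ∫ t in (1/2 - a)..(a - 1/2),
        (volume (ball (0 : EuclideanSpace ℝ (Fin (n - 1))) 1)).toReal *
          (1/4 - t ^ 2) ^ (((n : ℝ) - 1) / 2) := by
  obtain ⟨m, rfl⟩ : ∃ m, n = m + 1 := ⟨n - 1, by omega⟩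
  have h := pre m
  have hcast : ((m + 1 : ℕ) : ℝ) - 1 = (m : ℝ) := by push_cast; ring
  simp only [Nat.add_sub_cancel, hcast]
  exact h
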